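/- Let e ≥ 1 and k be natural numbers with k < 2^(e-1) and k even. Set T_k = C(2^e+2k+1, k)⁻¹ − C(2k+1, k)⁻¹ ∈ ℚ. Then either T_k = 0 or ν(T_k) ≥ e − 2·lg(k+2). -/

import Mathlib

open Finset Nat

private lemma aux_s2_cons (n : ℕ) (hn : 0 < n) :
    (Nat.digits 2 n).sum = n % 2 + (Nat.digits 2 (n / 2)).sum := by
  rw [Nat.digits_def' (by norm_num : 1 < 2) hn]
  simp

private lemma aux_two_pow_s2_le : ∀ n : ℕ, 2 ^ (Nat.digits 2 n).sum ≤ n + 1 := by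
  intro n
  induction n using Nat.strong_induction_on with
  | _ n ih =>
    rcases Nat.eq_zero_or_pos n with rfl | hn
    · simp
    · have h := aux_s2_cons n hn
      have ih2 := ih (n / 2) (by omega)
      rw [h, pow_add]
      rcases Nat.mod_two_eq_zero_or_one n with h2 | h2 <;> rw [h2] <;> simp <;> omega

private lemma aux_s2_le (n : ℕ) : (Nat.digits 2 n).sum ≤ n := by
  have h1 := aux_two_pow_s2_le n
  have h2 := Nat.lt_two_pow_self (n := (Nat.digits 2 n).sum)
  omega

private lemma aux_fact_val (n : ℕ) :
    padicValNat 2 (n !) = n - (Nat.digits 2 n).sum := by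
  have := @sub_one_mul_padicValNat_factorial 2 ⟨Nat.prime_two⟩ n
  simpa using this

private lemma aux_fact_mul_prod (m : ℕ) :
    ∀ k : ℕ, m ! * ∏ i ∈ range k, (m + 1 + i) = (m + k)!
  | 0 => by simp
  | k + 1 => by
    rw [prod_range_succ, ← mul_assoc, aux_fact_mul_prod m k,
      show m + (k + 1) = (m + k) + 1 by omega, Nat.factorial_succ]
    ring

/-- valuation of `2^e + a` equals valuation of `a` for `0 < a < 2^e`. -/
private lemma aux_val_two_pow_add (e a : ℕ) (ha : 0 < a) (hae : a < 2 ^ e) :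
    padicValNat 2 (2 ^ e + a) = padicValNat 2 a := by
  haveI : Fact (Nat.Prime 2) := ⟨Nat.prime_two⟩
  set m := padicValNat 2 a with hm
  have hd : 2 ^ m ∣ a := pow_padicValNat_dvd
  have hme : m < e := by
    by_contra h
    have h1 : 2 ^ e ≤ 2 ^ m := Nat.pow_le_pow_right (by norm_num) (by omega)
    have h2 := Nat.le_of_dvd ha hd
    omega
  have hnd : ¬ 2 ^ (m + 1) ∣ a := by
    intro h
    have := (padicValNat_dvd_iff_le (by omega : a ≠ 0)).1 h
    omega
  have hda : 2 ^ m ∣ 2 ^ e + a := Dvd.dvd.add (pow_dvd_pow 2 (by omega)) hd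
  have hnda : ¬ 2 ^ (m + 1) ∣ 2 ^ e + a := by
    intro h
    exact hnd ((Nat.dvd_add_right (pow_dvd_pow 2 (by omega))).1 h)
  have h1 : m ≤ padicValNat 2 (2 ^ e + a) :=
    (padicValNat_dvd_iff_le (by omega : 2 ^ e + a ≠ 0)).1 hda
  have h2 : ¬ (m + 1 ≤ padicValNat 2 (2 ^ e + a)) := fun h =>
    hnda ((padicValNat_dvd_iff_le (by omega : 2 ^ e + a ≠ 0)).2 h)
  omega

private lemma aux_key_ineq (e k s L c v : ℕ) (h1 : s + 1 ≤ L) (h2 : L + 1 ≤ e)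
    (hc : 1 ≤ c) (hv : v ≤ c * (L + 1)) (hvk : v ≤ k) (h3 : 2 * L ≤ e + k + s) :
    e + k + s - 2 * L ≤ e * c + (k - v) := by
  zify [hvk, h3]
  have hc' : (1 : ℤ) ≤ (c : ℤ) := by exact_mod_cast hc
  have hLe' : (L : ℤ) + 1 ≤ (e : ℤ) := by exact_mod_cast h2
  have hv' : (v : ℤ) ≤ (c : ℤ) * ((L : ℤ) + 1) := by exact_mod_cast hv
  have hs' : (s : ℤ) + 1 ≤ (L : ℤ) := by exact_mod_cast h1
  nlinarith [mul_nonneg (by linarith : (0 : ℤ) ≤ (c : ℤ) - 1)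
    (by linarith : (0 : ℤ) ≤ (e : ℤ) - ((L : ℤ) + 1))]

/-- e ≥ 1, k < 2^(e-1), k even; T_k = C(2^e+2k+1,k)⁻¹ − C(2k+1,k)⁻¹ is zero or
has 2-adic valuation ≥ e − 2·lg(k+2). -/
theorem stmt_1 (e k : ℕ) (he : 1 ≤ e) (hk : k < 2 ^ (e - 1)) (hkeven : Even k)
    (T : ℚ)
    (hT : T = (((2 ^ e + 2 * k + 1).choose k : ℚ))⁻¹ - (((2 * k + 1).choose k : ℚ))⁻¹) :
    T = 0 ∨ padicValRat 2 T ≥ (e : ℤ) - 2 * (Nat.log 2 (k + 2) : ℤ) := by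
  haveI : Fact (Nat.Prime 2) := ⟨Nat.prime_two⟩
  rcases Nat.eq_zero_or_pos k with rfl | hk0
  · left; simp [hT]
  obtain ⟨m, hkm⟩ := hkeven
  have hkm' : k = 2 * m := by omega
  have hm0 : 0 < m := by omega
  have hk2 : 2 ≤ k := by omega
  -- e ≥ 3
  have he3 : 3 ≤ e := by
    by_contra h
    interval_cases e <;> omega
  -- power facts
  have hE2 : 2 ^ e = 2 * 2 ^ (e - 1) := by
    rw [← pow_succ']
    congr 1
    omega
  have h2k : 2 * k + 1 < 2 ^ e := by omega
  set s := (Nat.digits 2 k).sum with hs_def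
  set L := Nat.log 2 (k + 2) with hL_def
  -- digit sum facts
  have hs_half : s = (Nat.digits 2 m).sum := by
    rw [hs_def, aux_s2_cons k hk0, show k % 2 = 0 by omega, show k / 2 = m by omega]
    omega
  have hs_succ : (Nat.digits 2 (k + 1)).sum = s + 1 := by
    rw [aux_s2_cons (k + 1) (by omega), show (k + 1) % 2 = 1 by omega,
      show (k + 1) / 2 = m by omega, hs_half]
    omega
  have hs_2k1 : (Nat.digits 2 (2 * k + 1)).sum = s + 1 := by
    rw [aux_s2_cons (2 * k + 1) (by omega), show (2 * k + 1) % 2 = 1 by omega,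
      show (2 * k + 1) / 2 = k by omega, hs_def]
    omega
  have hs_le : s ≤ k := aux_s2_le k
  -- log facts
  have hsL : s + 1 ≤ L := by
    have h1 := aux_two_pow_s2_le m
    have h2 : 2 ^ (s + 1) ≤ k + 2 := by
      rw [pow_succ, hs_half]
      omega
    exact (Nat.le_log_iff_pow_le (by norm_num) (by omega)).2 h2
  have hLe : L + 1 ≤ e := by
    have h1 : k + 2 < 2 ^ e := by omega
    have := Nat.log_lt_of_lt_pow (by omega : k + 2 ≠ 0) h1
    omega
  have hLk : L ≤ k + 1 := by
    have h1 : k + 2 < 2 ^ (k + 2) := Nat.lt_two_pow_self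
    have := Nat.log_lt_of_lt_pow (by omega : k + 2 ≠ 0) h1
    omega
  -- products
  set A := ∏ i ∈ range k, (k + 2 + i) with hA_def
  set B := ∏ i ∈ range k, (2 ^ e + (k + 2 + i)) with hB_def
  have hA_pos : 0 < A := Finset.prod_pos fun i _ => by omega
  have hB_pos : 0 < B := Finset.prod_pos fun i _ => by omega
  have hA_fact : (k + 1)! * A = (2 * k + 1)! := by
    have h0 : A = ∏ i ∈ range k, ((k + 1) + 1 + i) :=
      Finset.prod_congr rfl fun i _ => by omega
    rw [h0, aux_fact_mul_prod (k + 1) k]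
    congr 1
    omega
  have hB_fact : (2 ^ e + k + 1)! * B = (2 ^ e + 2 * k + 1)! := by
    have h0 : B = ∏ i ∈ range k, ((2 ^ e + k + 1) + 1 + i) :=
      Finset.prod_congr rfl fun i _ => by omega
    rw [h0, aux_fact_mul_prod (2 ^ e + k + 1) k]
    congr 1
    omega
  -- choose identities
  set C1 := (2 * k + 1).choose k with hC1_def
  set C2 := (2 ^ e + 2 * k + 1).choose k with hC2_def
  have hC1A : C1 * k ! = A := by
    have h := Nat.choose_mul_factorial_mul_factorial (by omega : k ≤ 2 * k + 1)
    rw [show 2 * k + 1 - k = k + 1 by omega] at h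
    have h2 : (C1 * k !) * (k + 1)! = A * (k + 1)! := by
      rw [mul_comm A _, hA_fact]
      exact h
    exact Nat.eq_of_mul_eq_mul_right (Nat.factorial_pos _) h2
  have hC2B : C2 * k ! = B := by
    have h := Nat.choose_mul_factorial_mul_factorial (by omega : k ≤ 2 ^ e + 2 * k + 1)
    rw [show 2 ^ e + 2 * k + 1 - k = 2 ^ e + k + 1 by omega] at h
    have h2 : (C2 * k !) * (2 ^ e + k + 1)! = B * (2 ^ e + k + 1)! := by
      rw [mul_comm B _, hB_fact]
      exact h
    exact Nat.eq_of_mul_eq_mul_right (Nat.factorial_pos _) h2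
  -- valuations of A, B
  have hνfact : ∀ n : ℕ, padicValNat 2 (n !) = n - (Nat.digits 2 n).sum := aux_fact_val
  have hνA : padicValNat 2 A = k := by
    have h := congrArg (padicValNat 2) hA_fact
    rw [padicValNat.mul (Nat.factorial_ne_zero _) (by omega)] at h
    rw [hνfact, hνfact, hs_succ, hs_2k1] at h
    omega
  have hai_lt : ∀ i ∈ range k, k + 2 + i < 2 ^ e := fun i hi => by
    have := Finset.mem_range.1 hi; omega
  have hνB : padicValNat 2 B = k := by
    rw [← hνA, hA_def, hB_def, ← Nat.factorization_def _ Nat.prime_two,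
      ← Nat.factorization_def _ Nat.prime_two,
      Nat.factorization_prod (fun i _ => by omega),
      Nat.factorization_prod (fun i _ => by omega),
      Finsupp.finset_sum_apply, Finsupp.finset_sum_apply]
    refine Finset.sum_congr rfl fun i hi => ?_
    rw [Nat.factorization_def _ Nat.prime_two, Nat.factorization_def _ Nat.prime_two]
    exact aux_val_two_pow_add e (k + 2 + i) (by omega) (hai_lt i hi)
  -- expansion of B
  set R := ∑ t ∈ ((range k).powerset.erase ∅),
      2 ^ (e * t.card) * ∏ i ∈ range k \ t, (k + 2 + i) with hR_def
  have hsplit : B = A + R := by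
    rw [hB_def, Finset.prod_add]
    rw [← Finset.add_sum_erase _ _ (Finset.empty_mem_powerset (range k))]
    congr 1
    · simp [hA_def]
    · exact Finset.sum_congr rfl fun t _ => by
        rw [Finset.prod_const, ← pow_mul, mul_comm e t.card, mul_comm t.card e]
  -- valuation bound on R
  set M := e + k + s - 2 * L with hM_def
  have h2L : 2 * L ≤ e + k + s := by omega
  have hRdvd : 2 ^ M ∣ R := by
    rw [hR_def]
    refine Finset.dvd_sum fun t ht => ?_
    have ht' : t ∈ (range k).powerset := Finset.mem_of_mem_erase ht
    have hts : t ⊆ range k := Finset.mem_powerset.1 ht'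
    have htne : t ≠ ∅ := Finset.ne_of_mem_erase ht
    have hc : 1 ≤ t.card := Finset.card_pos.2 (Finset.nonempty_of_ne_empty htne)
    set c := t.card with hc_def
    set Pt := ∏ i ∈ t, (k + 2 + i) with hPt_def
    set Qt := ∏ i ∈ range k \ t, (k + 2 + i) with hQt_def
    have hPt_pos : 0 < Pt := Finset.prod_pos fun i _ => by omega
    have hQt_pos : 0 < Qt := Finset.prod_pos fun i _ => by omega
    have hQP : Qt * Pt = A := by rw [hQt_def, hPt_def, Finset.prod_sdiff hts]
    have hνsplit : padicValNat 2 Qt + padicValNat 2 Pt = k := by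
      rw [← hνA, ← hQP, padicValNat.mul (by omega) (by omega)]
    have hνPt_sum : padicValNat 2 Pt = ∑ i ∈ t, padicValNat 2 (k + 2 + i) := by
      rw [hPt_def, ← Nat.factorization_def _ Nat.prime_two,
        Nat.factorization_prod (fun i _ => by omega), Finsupp.finset_sum_apply]
      exact Finset.sum_congr rfl fun i _ => Nat.factorization_def _ Nat.prime_two
    have hνa_le : ∀ i ∈ t, padicValNat 2 (k + 2 + i) ≤ L + 1 := by
      intro i hi
      have hir : i ∈ range k := hts hi
      have hi_lt : k + 2 + i < 2 ^ (L + 2) := by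
        have h1 : k + 2 < 2 ^ (L + 1) := Nat.lt_pow_succ_log_self (by norm_num) (k + 2)
        have h2 : (2:ℕ) ^ (L + 2) = 2 * 2 ^ (L + 1) := by ring
        have := Finset.mem_range.1 hir
        omega
      have hdvd : 2 ^ padicValNat 2 (k + 2 + i) ∣ (k + 2 + i) := pow_padicValNat_dvd
      have hle := Nat.le_of_dvd (by omega) hdvd
      by_contra h
      have : 2 ^ (L + 2) ≤ 2 ^ padicValNat 2 (k + 2 + i) :=
        Nat.pow_le_pow_right (by norm_num) (by omega)
      omega
    have hνPt_le : padicValNat 2 Pt ≤ c * (L + 1) := by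
      rw [hνPt_sum]
      calc ∑ i ∈ t, padicValNat 2 (k + 2 + i) ≤ t.card * (L + 1) := by
            rw [← smul_eq_mul]
            exact Finset.sum_le_card_nsmul t _ _ hνa_le
        _ = c * (L + 1) := rfl
    have hME : M ≤ e * c + (k - padicValNat 2 Pt) :=
      aux_key_ineq e k s L c (padicValNat 2 Pt) hsL hLe hc hνPt_le (by omega) h2L
    have hterm : 2 ^ (e * c + (k - padicValNat 2 Pt)) ∣ 2 ^ (e * c) * Qt := by
      rw [pow_add]
      refine mul_dvd_mul dvd_rfl ?_
      have : k - padicValNat 2 Pt = padicValNat 2 Qt := by omega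
      rw [this]
      exact pow_padicValNat_dvd
    exact dvd_trans (pow_dvd_pow 2 hME) hterm
  -- rationals
  have hAq : (A : ℚ) ≠ 0 := by positivity
  have hBq : (B : ℚ) ≠ 0 := by positivity
  have hkq : ((k ! : ℕ) : ℚ) ≠ 0 := by positivity
  have hC1q : ((C1 : ℕ) : ℚ)⁻¹ = (k ! : ℚ) / (A : ℚ) := by
    have hA' : (A : ℚ) = (C1 : ℚ) * (k ! : ℚ) := by exact_mod_cast hC1A.symm
    have hC1ne : (C1 : ℚ) ≠ 0 := by
      have : 0 < C1 := Nat.choose_pos (by omega)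
      positivity
    rw [hA']
    field_simp
  have hC2q : ((C2 : ℕ) : ℚ)⁻¹ = (k ! : ℚ) / (B : ℚ) := by
    have hB' : (B : ℚ) = (C2 : ℚ) * (k ! : ℚ) := by exact_mod_cast hC2B.symm
    have hC2ne : (C2 : ℚ) ≠ 0 := by
      have : 0 < C2 := Nat.choose_pos (by omega)
      positivity
    rw [hB']
    field_simp
  have hBAR : (B : ℚ) = (A : ℚ) + (R : ℚ) := by exact_mod_cast hsplit
  have hTval : T = -(((k ! * R : ℕ) : ℚ) / ((A * B : ℕ) : ℚ)) := by
    rw [hT, hC1q, hC2q]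
    push_cast
    rw [hBAR]
    have hARq : (A : ℚ) + (R : ℚ) ≠ 0 := by
      rw [← hBAR]; exact hBq
    field_simp
    ring
  by_cases hR0 : R = 0
  · left
    rw [hTval, hR0]
    simp
  -- valuation computation
  right
  have hkR_ne : ((k ! * R : ℕ) : ℚ) ≠ 0 := by
    have : k ! * R ≠ 0 := by positivity
    exact_mod_cast this
  have hAB_ne : ((A * B : ℕ) : ℚ) ≠ 0 := by
    have : A * B ≠ 0 := by positivity
    exact_mod_cast this
  rw [hTval, padicValRat.neg, padicValRat.div hkR_ne hAB_ne,
    ← padicValRat_of_nat, ← padicValRat_of_nat,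
    padicValNat.mul (Nat.factorial_ne_zero k) hR0,
    padicValNat.mul (by omega) (by omega)]
  have hνk : padicValNat 2 (k !) = k - s := by rw [hνfact]
  have hνR : M ≤ padicValNat 2 R := (padicValNat_dvd_iff_le hR0).1 hRdvd
  rw [hνk, hνA, hνB]
  omega
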